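/- Let α ∈ (0,1) be real, h > 0, and let β, γ be nonzero real numbers. Define u = (α + ih)/β and v = (1 − α − ih)/γ in ℂ. Suppose (q_k) is a sequence of positive integers and (p_k), (r_k), (s_k) are integer sequences with q_k·α − p_k → 0, (q_k + 1)·β − r_k → 0, and (q_k + 1)·γ − s_k → 0 as k → ∞. Then (r_k·u + s_k·v) − (q_k + 1) → 0 in ℂ and r_k·Re(u) − p_k → α as k → ∞; consequently e^{2πi(r_k·u + s_k·v)} → 1. -/

import Mathlib

open Filter Topology

/-- Let α ∈ (0,1), h > 0, β, γ ≠ 0, u = (α + ih)/β,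
v = (1 − α − ih)/γ. If q_k·α − p_k → 0, (q_k+1)·β − r_k → 0 and
(q_k+1)·γ − s_k → 0, then (r_k·u + s_k·v) − (q_k+1) → 0 in ℂ and
r_k·Re(u) − p_k → α; consequently e^{2πi(r_k·u + s_k·v)} → 1. -/
theorem limits_for_constructed_uv (α : ℝ) (hα : α ∈ Set.Ioo (0 : ℝ) 1)
    (h : ℝ) (hh : 0 < h) (β γ : ℝ) (hβ : β ≠ 0) (hγ : γ ≠ 0)
    (u v : ℂ)
    (hu : u = ((α : ℂ) + (h : ℂ) * Complex.I) / (β : ℂ))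
    (hv : v = (1 - (α : ℂ) - (h : ℂ) * Complex.I) / (γ : ℂ))
    (q : ℕ → ℕ) (hq : ∀ k, 0 < q k) (p r s : ℕ → ℤ)
    (h1 : Tendsto (fun k => (q k : ℝ) * α - (p k : ℝ)) atTop (𝓝 0))
    (h2 : Tendsto (fun k => ((q k : ℝ) + 1) * β - (r k : ℝ)) atTop (𝓝 0))
    (h3 : Tendsto (fun k => ((q k : ℝ) + 1) * γ - (s k : ℝ)) atTop (𝓝 0)) :
    Tendsto (fun k => ((r k : ℂ) * u + (s k : ℂ) * v) - ((q k : ℂ) + 1)) atTop (𝓝 0) ∧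
    Tendsto (fun k => (r k : ℝ) * u.re - (p k : ℝ)) atTop (𝓝 α) ∧
    Tendsto (fun k => Complex.exp (2 * Real.pi * Complex.I * ((r k : ℂ) * u + (s k : ℂ) * v)))
      atTop (𝓝 1) := by
  have hβc : (β : ℂ) ≠ 0 := by exact_mod_cast hβ
  have hγc : (γ : ℂ) ≠ 0 := by exact_mod_cast hγ
  have hsum : (β : ℂ) * u + (γ : ℂ) * v = 1 := by
    rw [hu, hv]; field_simp; ring
  -- complex versions of h2, h3
  have h2c : Tendsto (fun k => (((q k : ℂ) + 1) * β - (r k : ℂ))) atTop (𝓝 0) := by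
    have := (Complex.continuous_ofReal.tendsto 0).comp h2
    simp only [Function.comp_def, Complex.ofReal_zero] at this
    push_cast at this
    exact this
  have h3c : Tendsto (fun k => (((q k : ℂ) + 1) * γ - (s k : ℂ))) atTop (𝓝 0) := by
    have := (Complex.continuous_ofReal.tendsto 0).comp h3
    simp only [Function.comp_def, Complex.ofReal_zero] at this
    push_cast at this
    exact this
  have key : ∀ k, ((r k : ℂ) * u + (s k : ℂ) * v) - ((q k : ℂ) + 1) =
      -((((q k : ℂ) + 1) * β - (r k : ℂ)) * u) - ((((q k : ℂ) + 1) * γ - (s k : ℂ)) * v) := by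
    intro k
    linear_combination ((q k : ℂ) + 1) * hsum
  have T1 : Tendsto (fun k => ((r k : ℂ) * u + (s k : ℂ) * v) - ((q k : ℂ) + 1)) atTop (𝓝 0) := by
    have := ((h2c.mul_const u).neg.sub (h3c.mul_const v))
    simp only [neg_zero, zero_mul, sub_zero] at this
    simpa [key] using this
  refine ⟨T1, ?_, ?_⟩
  · -- second limit
    have hre : u.re = α / β := by
      rw [hu]
      simp [Complex.div_re, Complex.normSq_apply, div_eq_div_iff, hβ]
      ring
    have keyR : ∀ k, (r k : ℝ) * u.re - (p k : ℝ) =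
        -((((q k : ℝ) + 1) * β - (r k : ℝ)) * (α / β)) + ((q k : ℝ) * α - (p k : ℝ)) + α := by
      intro k
      rw [hre]
      field_simp
      ring
    have := ((h2.mul_const (α / β)).neg.add h1).add_const α
    simp only [zero_mul, neg_zero, zero_add, add_zero] at this
    simpa [keyR] using this
  · -- third limit
    have expform : ∀ k, Complex.exp (2 * Real.pi * Complex.I * ((r k : ℂ) * u + (s k : ℂ) * v)) =
        Complex.exp (2 * Real.pi * Complex.I *
          (((r k : ℂ) * u + (s k : ℂ) * v) - ((q k : ℂ) + 1))) := by
      intro k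
      calc Complex.exp (2 * Real.pi * Complex.I * ((r k : ℂ) * u + (s k : ℂ) * v))
          = Complex.exp (2 * Real.pi * Complex.I *
              (((r k : ℂ) * u + (s k : ℂ) * v) - ((q k : ℂ) + 1)) +
              (((q k : ℤ) + 1) : ℂ) * (2 * Real.pi * Complex.I)) := by
            congr 1; push_cast; ring
        _ = Complex.exp (2 * Real.pi * Complex.I *
              (((r k : ℂ) * u + (s k : ℂ) * v) - ((q k : ℂ) + 1))) *
            Complex.exp ((((q k : ℤ) + 1) : ℂ) * (2 * Real.pi * Complex.I)) := Complex.exp_add _ _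
        _ = Complex.exp (2 * Real.pi * Complex.I *
              (((r k : ℂ) * u + (s k : ℂ) * v) - ((q k : ℂ) + 1))) := by
            rw [show (((q k : ℤ) : ℂ) + 1) = (((q k : ℤ) + 1 : ℤ) : ℂ) by push_cast; ring,
              Complex.exp_int_mul_two_pi_mul_I, mul_one]
    have t2 := T1.const_mul (2 * Real.pi * Complex.I)
    rw [mul_zero] at t2
    have := (Complex.continuous_exp.tendsto 0).comp t2
    simp only [Complex.exp_zero, Function.comp_def] at this
    rw [funext expform]
    exact this
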